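/- Let V be a 4-dimensional vector space over F_q (q odd) with a nondegenerate symmetric bilinear form of minus type, and let L be an elliptic 2-dimensional subspace. Then there are exactly two degenerate 3-dimensional subspaces of V containing L, and their radicals (tangent directions) are distinct isotropic 1-dimensional subspaces. -/

import Mathlib

open Module

-- counting lemma
lemma exists_quad_sol {F : Type*} [Field F] [Fintype F]
    (hcard : Fintype.card F % 2 = 1) {a b : F} (ha : a ≠ 0) (hb : b ≠ 0) (c : F) :
    ∃ x y : F, a * x ^ 2 + b * y ^ 2 = c := by
  classical
  obtain ⟨x, y, hxy⟩ := FiniteField.exists_root_sum_quadratic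
    (f := Polynomial.C a * Polynomial.X ^ 2)
    (g := Polynomial.C b * Polynomial.X ^ 2 - Polynomial.C c)
    (Polynomial.degree_C_mul_X_pow 2 ha)
    (by rw [Polynomial.degree_sub_C (by rw [Polynomial.degree_C_mul_X_pow 2 hb]; norm_num)]
        exact Polynomial.degree_C_mul_X_pow 2 hb) hcard
  refine ⟨x, y, ?_⟩
  simp only [Polynomial.eval_add, Polynomial.eval_sub, Polynomial.eval_mul, Polynomial.eval_C,
    Polynomial.eval_pow, Polynomial.eval_X] at hxy
  linear_combination hxy

lemma nonsq_ratio {F : Type*} [Field F] [Fintype F] (hchar : ringChar F ≠ 2)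
    {a b : F} (ha : a ≠ 0) (hb : b ≠ 0) (hA : ¬ IsSquare a) (hB : ¬ IsSquare b) :
    ∃ t : F, t ≠ 0 ∧ b = t ^ 2 * a := by
  have key : ∀ c : F, c ≠ 0 → ¬ IsSquare c → c ^ (Fintype.card F / 2) = -1 := by
    intro c hc hsq
    have h2 : Fintype.card F / 2 * 2 = Fintype.card F - 1 := by
      have := FiniteField.odd_card_of_char_ne_two hchar; omega
    have h1 : c ^ (Fintype.card F / 2) * c ^ (Fintype.card F / 2) = 1 := by
      rw [← pow_add]
      have : Fintype.card F / 2 + Fintype.card F / 2 = Fintype.card F - 1 := by omega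
      rw [this]; exact FiniteField.pow_card_sub_one_eq_one c hc
    rcases mul_self_eq_one_iff.mp h1 with h | h
    · exact absurd ((FiniteField.isSquare_iff hchar hc).mpr h) hsq
    · exact h
  have hab : IsSquare (a * b) := by
    refine (FiniteField.isSquare_iff hchar (mul_ne_zero ha hb)).mpr ?_
    rw [mul_pow, key a ha hA, key b hb hB]; ring
  obtain ⟨s, hs⟩ := hab
  refine ⟨s / a, ?_, ?_⟩
  · intro h
    rw [div_eq_zero_iff] at h
    rcases h with h | h
    · rw [h, mul_zero] at hs
      rcases mul_eq_zero.mp hs with h' | h'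
      exacts [absurd h' ha, absurd h' hb]
    · exact ha h
  · field_simp
    linear_combination hs


section Helpers
variable {F V : Type*} [Field F] [AddCommGroup V] [Module F V]

lemma span_pair_finrank_two [FiniteDimensional F V] {x y : V}
    (hind : ∀ a b : F, a • x + b • y = 0 → a = 0 ∧ b = 0) :
    finrank F ↥(Submodule.span F {x, y}) = 2 := by
  have hx : x ≠ 0 := by
    intro h
    have := hind 1 0 (by simp [h])
    simpa using this.1
  have hy : y ≠ 0 := by
    intro h
    have := hind 0 1 (by simp [h])
    simpa using this.2
  have hsp : Submodule.span F ({x, y} : Set V) = (F ∙ x) ⊔ (F ∙ y) := by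
    rw [Submodule.span_insert]
  have hinf : (F ∙ x) ⊓ (F ∙ y) = ⊥ := by
    rw [eq_bot_iff]
    rintro z ⟨hz1, hz2⟩
    obtain ⟨a, rfl⟩ := Submodule.mem_span_singleton.mp hz1
    obtain ⟨b, hb⟩ := Submodule.mem_span_singleton.mp hz2
    have : a • x + (-b) • y = 0 := by rw [neg_smul, ← hb]; abel
    have := (hind a (-b) this).1
    simp [this]
  have := Submodule.finrank_sup_add_finrank_inf_eq (F ∙ x) (F ∙ y)
  rw [hinf, finrank_bot, finrank_span_singleton hx, finrank_span_singleton hy] at this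
  rw [hsp]
  omega

lemma span_pair_isotropic (B : LinearMap.BilinForm F V) {x y : V}
    (hxx : B x x = 0) (hxy : B x y = 0) (hyx : B y x = 0) (hyy : B y y = 0) :
    ∀ u ∈ Submodule.span F ({x, y} : Set V), ∀ v ∈ Submodule.span F ({x, y} : Set V),
      B u v = 0 := by
  intro u hu v hv
  obtain ⟨a, b, rfl⟩ := Submodule.mem_span_pair.mp hu
  obtain ⟨c, d, rfl⟩ := Submodule.mem_span_pair.mp hv
  simp only [map_add, map_smul, LinearMap.add_apply, LinearMap.smul_apply, smul_eq_mul,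
    hxx, hxy, hyx, hyy]
  ring

/-- orthogonal "basis" pair of an anisotropic 2-dim subspace -/
lemma exists_orth_pair [FiniteDimensional F V] (B : LinearMap.BilinForm F V)
    (hsymm : B.IsSymm) (W : Submodule F V) (hW : finrank F ↥W = 2)
    (haniso : ∀ v ∈ W, B v v = 0 → v = 0) :
    ∃ x, x ∈ W ∧ ∃ y, y ∈ W ∧ B x x ≠ 0 ∧ B y y ≠ 0 ∧ B x y = 0 ∧ B y x = 0 ∧
      ∀ a b : F, a • x + b • y = 0 → a = 0 ∧ b = 0 := by
  have hs : ∀ u v : V, B u v = B v u := fun u v => hsymm.eq u v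
  have hWne : W ≠ ⊥ := by
    intro h
    rw [h, finrank_bot] at hW
    omega
  obtain ⟨x, hxW, hx0⟩ := Submodule.exists_mem_ne_zero_of_ne_bot hWne
  have hxx : B x x ≠ 0 := fun h => hx0 (haniso x hxW h)
  set φ : ↥W →ₗ[F] F := (B x).comp W.subtype with hφ
  have hker : LinearMap.ker φ ≠ ⊥ := by
    intro h
    have h1 := LinearMap.finrank_range_add_finrank_ker φ
    rw [h, finrank_bot, hW] at h1
    have h2 : finrank F ↥(LinearMap.range φ) ≤ finrank F F := Submodule.finrank_le _
    rw [finrank_self] at h2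
    omega
  obtain ⟨y₀, hy₀ker, hy₀0⟩ := Submodule.exists_mem_ne_zero_of_ne_bot hker
  have hy0 : (y₀ : V) ≠ 0 := fun h => hy₀0 (by exact_mod_cast Subtype.ext h)
  have hxy : B x (y₀ : V) = 0 := hy₀ker
  have hyx : B (y₀ : V) x = 0 := by rw [hs]; exact hxy
  have hyy : B (y₀ : V) (y₀ : V) ≠ 0 := fun h => hy0 (haniso _ y₀.2 h)
  refine ⟨x, hxW, (y₀ : V), y₀.2, hxx, hyy, hxy, hyx, ?_⟩
  intro a b hab
  have h1 : B (a • x + b • (y₀ : V)) x = 0 := by rw [hab]; simp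
  simp only [map_add, map_smul, LinearMap.add_apply, LinearMap.smul_apply, smul_eq_mul,
    hyx] at h1
  have ha : a = 0 := by
    rcases mul_eq_zero.mp (by linear_combination h1 : a * B x x = 0) with h | h
    · exact h
    · exact absurd h hxx
  refine ⟨ha, ?_⟩
  rw [ha, zero_smul, zero_add] at hab
  rcases smul_eq_zero.mp hab with h | h
  · exact h
  · exact absurd h hy0

end Helpers

lemma exists_ti_plane {F V : Type*} [Field F] [Fintype F] [AddCommGroup V] [Module F V]
    [FiniteDimensional F V] (hchar : ringChar F ≠ 2)
    (B : LinearMap.BilinForm F V) (hsymm : B.IsSymm)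
    (L : Submodule F V) (hL2 : finrank F ↥L = 2)
    (hanisoL : ∀ v ∈ L, B v v = 0 → v = 0)
    (hM2 : finrank F ↥(B.orthogonal L) = 2)
    (hdisj : L ⊓ B.orthogonal L = ⊥)
    (hanisoM : ∀ v ∈ B.orthogonal L, B v v = 0 → v = 0) :
    ∃ U : Submodule F V, finrank F ↥U = 2 ∧ ∀ u ∈ U, ∀ v ∈ U, B u v = 0 := by
  classical
  set M := B.orthogonal L with hM
  have hs : ∀ u v : V, B u v = B v u := fun u v => hsymm.eq u v
  have hcard : Fintype.card F % 2 = 1 := FiniteField.odd_card_of_char_ne_two hchar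
  have hLM : ∀ l ∈ L, ∀ m ∈ M, B l m = 0 := by
    intro l hl m hm
    exact (LinearMap.BilinForm.mem_orthogonal_iff.mp hm) l hl
  obtain ⟨e₁, he₁L, e₂, he₂L, he11, he22ne, he12, he21, hinde⟩ :=
    exists_orth_pair B hsymm L hL2 hanisoL
  obtain ⟨f₁, hf₁M, f₂, hf₂M, hf11, hf22ne, hf12, hf21, hindf⟩ :=
    exists_orth_pair B hsymm M hM2 hanisoM
  -- ε
  set ε : F := -(B e₂ e₂) * (B e₁ e₁)⁻¹ with hε
  have hε0 : ε ≠ 0 := by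
    apply mul_ne_zero (neg_ne_zero.mpr he22ne) (inv_ne_zero he11)
  have he22 : B e₂ e₂ = -(ε * B e₁ e₁) := by
    rw [hε, mul_assoc, inv_mul_cancel₀ he11, mul_one, neg_neg]
  have hnsε : ¬ IsSquare ε := by
    rintro ⟨t, ht⟩
    have hv : (t • e₁ + e₂ : V) ∈ L := L.add_mem (L.smul_mem t he₁L) he₂L
    have hvv : B (t • e₁ + e₂) (t • e₁ + e₂) = 0 := by
      simp only [map_add, map_smul, LinearMap.add_apply, LinearMap.smul_apply, smul_eq_mul,
        he12, he21, he22]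
      linear_combination (B e₁ e₁) * ht.symm
    have hv0 := hanisoL _ hv hvv
    have := hinde t 1 (by rw [one_smul]; exact hv0)
    exact one_ne_zero this.2
  -- ε'
  set ε' : F := -(B f₂ f₂) * (B f₁ f₁)⁻¹ with hε'
  have hε'0 : ε' ≠ 0 := mul_ne_zero (neg_ne_zero.mpr hf22ne) (inv_ne_zero hf11)
  have hf22 : B f₂ f₂ = -(ε' * B f₁ f₁) := by rw [hε', mul_assoc, inv_mul_cancel₀ hf11, mul_one, neg_neg]
  have hnsε' : ¬ IsSquare ε' := by
    rintro ⟨t, ht⟩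
    have hv : (t • f₁ + f₂ : V) ∈ M := M.add_mem (M.smul_mem t hf₁M) hf₂M
    have hvv : B (t • f₁ + f₂) (t • f₁ + f₂) = 0 := by
      simp only [map_add, map_smul, LinearMap.add_apply, LinearMap.smul_apply, smul_eq_mul,
        hf12, hf21, hf22]
      linear_combination (B f₁ f₁) * ht.symm
    have hv0 := hanisoM _ hv hvv
    have := hindf t 1 (by rw [one_smul]; exact hv0)
    exact one_ne_zero this.2
  obtain ⟨t, ht0, htε⟩ := nonsq_ratio hchar hε0 hε'0 hnsε hnsε'
  -- rescaled f₂
  set g : V := t⁻¹ • f₂ with hg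
  have hgM : g ∈ M := M.smul_mem _ hf₂M
  have hgg : B g g = -(ε * B f₁ f₁) := by
    simp only [hg, map_smul, LinearMap.smul_apply, smul_eq_mul, hf22, htε]
    field_simp
  have hf1g : B f₁ g = 0 := by simp [hg, hf12]
  have hgf1 : B g f₁ = 0 := by simp [hg, hf21]
  have hindfg : ∀ a b : F, a • f₁ + b • g = 0 → a = 0 ∧ b = 0 := by
    intro a b hab
    have : a • f₁ + (b * t⁻¹) • f₂ = 0 := by
      rw [← hab, hg, smul_smul]
    obtain ⟨h1, h2⟩ := hindf _ _ this
    refine ⟨h1, ?_⟩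
    rcases mul_eq_zero.mp h2 with h | h
    · exact h
    · exact absurd h (inv_ne_zero ht0)
  -- counting solution
  obtain ⟨a, b, hab⟩ := exists_quad_sol hcard hf11
    (neg_ne_zero.mpr (mul_ne_zero hε0 hf11)) (-(B e₁ e₁))
    (b := -(ε * B f₁ f₁))
  -- the two isotropic vectors
  set u₁ : V := e₁ + (a • f₁ + b • g) with hu₁
  set u₂ : V := e₂ + ((ε * b) • f₁ + a • g) with hu₂
  have hm₁ : (a • f₁ + b • g : V) ∈ M := M.add_mem (M.smul_mem _ hf₁M) (M.smul_mem _ hgM)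
  have hm₂ : ((ε * b) • f₁ + a • g : V) ∈ M := M.add_mem (M.smul_mem _ hf₁M) (M.smul_mem _ hgM)
  have hcross : ∀ l, l ∈ L → ∀ m, m ∈ M → B l m = 0 ∧ B m l = 0 := by
    intro l hl m hm
    exact ⟨hLM l hl m hm, by rw [hs]; exact hLM l hl m hm⟩
  have c1f1 := hcross e₁ he₁L f₁ hf₁M
  have c1g := hcross e₁ he₁L g hgM
  have c2f1 := hcross e₂ he₂L f₁ hf₁M
  have c2g := hcross e₂ he₂L g hgM
  have hB11 : B u₁ u₁ = 0 := by
    simp only [hu₁, map_add, map_smul, LinearMap.add_apply, LinearMap.smul_apply, smul_eq_mul,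
      he11, c1f1.1, c1f1.2, c1g.1, c1g.2, hf11, hf12, hf21, hf1g, hgf1, hgg, he22]
    linear_combination hab
  have hB22 : B u₂ u₂ = 0 := by
    simp only [hu₂, map_add, map_smul, LinearMap.add_apply, LinearMap.smul_apply, smul_eq_mul,
      he22, c2f1.1, c2f1.2, c2g.1, c2g.2, hf11, hf12, hf21, hf1g, hgf1, hgg]
    linear_combination (-ε) * hab
  have hB12 : B u₁ u₂ = 0 := by
    simp only [hu₁, hu₂, map_add, map_smul, LinearMap.add_apply, LinearMap.smul_apply,
      smul_eq_mul, he12, c1f1.1, c1f1.2, c1g.1, c1g.2, c2f1.1, c2f1.2, c2g.1, c2g.2,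
      hf11, hf12, hf21, hf1g, hgf1, hgg]
    ring
  have hB21 : B u₂ u₁ = 0 := by rw [hs]; exact hB12
  have hindu : ∀ x y : F, x • u₁ + y • u₂ = 0 → x = 0 ∧ y = 0 := by
    intro x y hxy
    have hXY : (x • e₁ + y • e₂) + (x • (a • f₁ + b • g) + y • ((ε * b) • f₁ + a • g)) = 0 := by
      rw [← hxy, hu₁, hu₂]
      module
    set X : V := x • e₁ + y • e₂ with hX
    set Y : V := x • (a • f₁ + b • g) + y • ((ε * b) • f₁ + a • g) with hY
    have hXL : X ∈ L := L.add_mem (L.smul_mem _ he₁L) (L.smul_mem _ he₂L)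
    have hYM : Y ∈ M := M.add_mem (M.smul_mem _ hm₁) (M.smul_mem _ hm₂)
    have hXmem : X ∈ L ⊓ M := by
      refine ⟨hXL, ?_⟩
      have : X = -Y := by rw [eq_neg_iff_add_eq_zero]; exact hXY
      rw [this]
      exact M.neg_mem hYM
    rw [hdisj] at hXmem
    exact hinde x y hXmem
  refine ⟨Submodule.span F {u₁, u₂}, span_pair_finrank_two hindu,
    span_pair_isotropic B hB11 hB12 hB21 hB22⟩


/-- The radical of a subspace `W` with respect to a bilinear form `B`:
`rad(W) = W ∩ W^⊥`. -/
def bilinRadical {F V : Type*} [Field F] [AddCommGroup V] [Module F V]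
    (B : LinearMap.BilinForm F V) (W : Submodule F V) : Submodule F V :=
  W ⊓ B.orthogonal W

/-- A subspace `W` is an *elliptic line* for `B` if it is 2-dimensional,
nondegenerate and anisotropic. -/
def IsEllipticLine {F V : Type*} [Field F] [AddCommGroup V] [Module F V]
    (B : LinearMap.BilinForm F V) (W : Submodule F V) : Prop :=
  finrank F W = 2 ∧ (B.restrict W).Nondegenerate ∧ ∀ v ∈ W, B v v = 0 → v = 0

/-- Let `V` be 4-dimensional over `F_q` (`q` odd) with a nondegenerate symmetric
bilinear form of minus type (Witt index 1, i.e. no totally isotropic 2-dimensional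
subspace), and let `L` be an elliptic line.  Then there are exactly two degenerate
3-dimensional subspaces of `V` containing `L`, and their radicals are distinct
isotropic 1-dimensional subspaces. -/
theorem two_degenerate_three_spaces_through_elliptic_line
    {F V : Type*} [Field F] [Fintype F] [AddCommGroup V] [Module F V]
    (q : ℕ) (hq : Fintype.card F = q) (hodd : Odd q)
    (hdim : finrank F V = 4)
    (B : LinearMap.BilinForm F V) (hsymm : B.IsSymm) (hB : B.Nondegenerate)
    (hminus : ¬ ∃ U : Submodule F V, finrank F U = 2 ∧ ∀ u ∈ U, ∀ v ∈ U, B u v = 0)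
    (L : Submodule F V) (hL : IsEllipticLine B L) :
    ∃ W₁ W₂ : Submodule F V, W₁ ≠ W₂ ∧
      {W : Submodule F V | L ≤ W ∧ finrank F W = 3 ∧ ¬ (B.restrict W).Nondegenerate}
        = {W₁, W₂} ∧
      bilinRadical B W₁ ≠ bilinRadical B W₂ ∧
      (∀ W ∈ ({W₁, W₂} : Set (Submodule F V)),
        finrank F (bilinRadical B W) = 1 ∧ ∀ v ∈ bilinRadical B W, B v v = 0) := by
  classical
  have hFD : FiniteDimensional F V := FiniteDimensional.of_finrank_pos (by rw [hdim]; norm_num)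
  have hs : ∀ u v : V, B u v = B v u := fun u v => hsymm.eq u v
  have hrefl : B.IsRefl := hsymm.isRefl
  have hcard : Fintype.card F % 2 = 1 := by rw [hq]; exact Nat.odd_iff.mp hodd
  have hchar : ringChar F ≠ 2 := by
    intro h
    have := FiniteField.even_card_iff_char_two.mp h
    omega
  have two_ne : (2 : F) ≠ 0 := by
    intro h
    have h2 : ringChar F ∣ 2 := by
      rw [← ringChar.spec]
      exact_mod_cast h
    rcases (Nat.dvd_prime Nat.prime_two).mp h2 with h' | h'
    · exact CharP.char_ne_one F (ringChar F) h'
    · exact hchar h'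
  obtain ⟨hL2, hLnd, hLaniso⟩ := hL
  set M := B.orthogonal L with hMdef
  have hM2 : finrank F ↥M = 2 := by
    rw [hMdef, LinearMap.BilinForm.finrank_orthogonal hB L, hdim, hL2]
  have hcompl : IsCompl L M := B.isCompl_orthogonal_of_restrict_nondegenerate hrefl hLnd
  have hdisj : L ⊓ M = ⊥ := hcompl.inf_eq_bot
  have hLM : ∀ l ∈ L, ∀ m ∈ M, B l m = 0 := fun l hl m hm =>
    (LinearMap.BilinForm.mem_orthogonal_iff.mp hm) l hl
  have hML : ∀ m ∈ M, ∀ l ∈ L, B m l = 0 := fun m hm l hl => by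
    rw [hs]; exact hLM l hl m hm
  -- restriction to M is nondegenerate
  have hMnd : (B.restrict M).Nondegenerate := by
    refine (LinearMap.IsRefl.nondegenerate_iff_separatingLeft (hsymm.restrict M).isRefl).mpr ?_
    rintro ⟨m, hm⟩ h
    have hall : ∀ n : V, B m n = 0 := by
      intro n
      have hn : n ∈ L ⊔ M := by rw [hcompl.sup_eq_top]; trivial
      obtain ⟨l, hl, m', hm', rfl⟩ := Submodule.mem_sup.mp hn
      have h1 : B m l = 0 := hML m hm l hl
      have h2 : B m m' = 0 := h ⟨m', hm'⟩
      rw [map_add, h1, h2, add_zero]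
    exact Subtype.ext (hB.1 m hall)
  -- existence of an isotropic vector in M
  obtain ⟨r, hrM, hr0, hrr⟩ : ∃ r, r ∈ M ∧ r ≠ 0 ∧ B r r = 0 := by
    by_contra hno
    push_neg at hno
    have hanisoM : ∀ v ∈ M, B v v = 0 → v = 0 := by
      intro v hv hvv
      by_contra h0
      exact (hno v hv h0) hvv
    exact hminus (exists_ti_plane hchar B hsymm L hL2 hLaniso hM2 hdisj hanisoM)
  -- second isotropic vector
  obtain ⟨r', hr'M, hr'0, hr'r', hBrr'⟩ :
      ∃ r', r' ∈ M ∧ r' ≠ 0 ∧ B r' r' = 0 ∧ B r r' = 1 := by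
    obtain ⟨w, hwM, hw⟩ : ∃ w, w ∈ M ∧ B r w ≠ 0 := by
      by_contra hno
      push_neg at hno
      have : (⟨r, hrM⟩ : ↥M) = 0 := hMnd.1 ⟨r, hrM⟩ (fun y => hno y y.2)
      exact hr0 (by simpa using Subtype.ext_iff.mp this)
    set w' : V := (B r w)⁻¹ • w with hw'
    have hw'M : w' ∈ M := M.smul_mem _ hwM
    have hrw' : B r w' = 1 := by
      rw [hw', map_smul, smul_eq_mul, inv_mul_cancel₀ hw]
    have hw'r : B w' r = 1 := by rw [hs]; exact hrw'
    clear_value w'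
    set k : F := B w' w' / 2 with hk
    clear_value k
    refine ⟨w' - k • r, M.sub_mem hw'M (M.smul_mem _ hrM), ?_, ?_, ?_⟩
    · intro h
      have : B r (w' - k • r) = 0 := by rw [h, map_zero]
      rw [map_sub, map_smul, smul_eq_mul, hrw', hrr, mul_zero, sub_zero] at this
      exact one_ne_zero this
    · simp only [map_sub, map_smul, LinearMap.sub_apply, LinearMap.smul_apply, smul_eq_mul,
        hrw', hw'r, hrr]
      field_simp [hk]
      haveI : NeZero (2 : F) := ⟨two_ne⟩
      rw [hk, mul_zero, sub_zero, mul_one, sub_sub, add_halves, sub_self]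
    · rw [map_sub, map_smul, smul_eq_mul, hrw', hrr, mul_zero, sub_zero]
  have hBr'r : B r' r = 1 := by rw [hs]; exact hBrr'
  -- independence of r, r'
  have hindr : ∀ a b : F, a • r + b • r' = 0 → a = 0 ∧ b = 0 := by
    intro a b hab
    have h1 : B r (a • r + b • r') = 0 := by rw [hab, map_zero]
    rw [map_add, map_smul, map_smul, smul_eq_mul, smul_eq_mul, hrr, hBrr', mul_zero,
      mul_one, zero_add] at h1
    subst h1
    rw [zero_smul, add_zero] at hab
    rcases smul_eq_zero.mp hab with h | h
    · exact ⟨h, rfl⟩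
    · exact absurd h hr0
  -- M is spanned by r, r'
  have hMspan : Submodule.span F ({r, r'} : Set V) = M := by
    apply Submodule.eq_of_le_of_finrank_eq
    · rw [Submodule.span_le]
      rintro z (rfl | rfl)
      · exact hrM
      · exact hr'M
    · rw [span_pair_finrank_two hindr, hM2]
  -- classification of isotropic vectors in M
  have hclass : ∀ v ∈ M, B v v = 0 → v ∈ (F ∙ r) ∨ v ∈ (F ∙ r') := by
    intro v hv hvv
    rw [← hMspan] at hv
    obtain ⟨a, b, rfl⟩ := Submodule.mem_span_pair.mp hv
    simp only [map_add, map_smul, LinearMap.add_apply, LinearMap.smul_apply, smul_eq_mul,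
      hrr, hr'r', hBrr', hBr'r] at hvv
    have hab : a * b = 0 := by
      have h2 : 2 * (a * b) = 0 := by linear_combination hvv
      rcases mul_eq_zero.mp h2 with h | h
      · exact absurd h two_ne
      · exact h
    rcases mul_eq_zero.mp hab with h | h
    · right
      rw [h, zero_smul, zero_add]
      exact Submodule.smul_mem _ _ (Submodule.mem_span_singleton_self _)
    · left
      rw [h, zero_smul, add_zero]
      exact Submodule.smul_mem _ _ (Submodule.mem_span_singleton_self _)
  -- key properties of W = L ⊔ span s for isotropic s in M
  have key : ∀ s : V, s ∈ M → s ≠ 0 → B s s = 0 →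
      finrank F ↥(L ⊔ (F ∙ s)) = 3 ∧
      ¬ (B.restrict (L ⊔ (F ∙ s))).Nondegenerate ∧
      bilinRadical B (L ⊔ (F ∙ s)) = (F ∙ s) := by
    intro s hsM hs0 hss
    have hsnotL : s ∉ L := by
      intro h
      exact hs0 (by rw [← Submodule.mem_bot (R := F), ← hdisj]; exact ⟨h, hsM⟩)
    have hinf : L ⊓ (F ∙ s) = ⊥ := by
      rw [eq_bot_iff]
      rintro z ⟨hz1, hz2⟩
      obtain ⟨c, rfl⟩ := Submodule.mem_span_singleton.mp hz2
      rcases eq_or_ne c 0 with h | h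
      · rw [h, zero_smul]; exact Submodule.zero_mem ⊥
      · exact absurd (by
          have : s = c⁻¹ • (c • s) := by rw [smul_smul, inv_mul_cancel₀ h, one_smul]
          rw [this]; exact L.smul_mem _ hz1) hsnotL
    have hrank : finrank F ↥(L ⊔ (F ∙ s)) = 3 := by
      have := Submodule.finrank_sup_add_finrank_inf_eq L (F ∙ s)
      rw [hinf, finrank_bot, hL2, finrank_span_singleton hs0] at this
      omega
    -- s is orthogonal to all of W
    have hperp : ∀ w ∈ L ⊔ (F ∙ s), B w s = 0 := by
      intro w hw
      obtain ⟨l, hl, y, hy, rfl⟩ := Submodule.mem_sup.mp hw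
      obtain ⟨c, rfl⟩ := Submodule.mem_span_singleton.mp hy
      rw [map_add, LinearMap.add_apply, hLM l hl s hsM, map_smul, LinearMap.smul_apply,
        smul_eq_mul, hss, mul_zero, add_zero]
    have hsW : s ∈ L ⊔ (F ∙ s) := Submodule.mem_sup_right (Submodule.mem_span_singleton_self s)
    have hdeg : ¬ (B.restrict (L ⊔ (F ∙ s))).Nondegenerate := by
      intro hnd
      have : (⟨s, hsW⟩ : ↥(L ⊔ (F ∙ s))) = 0 := by
        apply hnd.1
        rintro ⟨y, hy⟩
        show B s y = 0
        rw [hs]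
        exact hperp y hy
      exact hs0 (by simpa using Subtype.ext_iff.mp this)
    refine ⟨hrank, hdeg, ?_⟩
    show (L ⊔ (F ∙ s)) ⊓ B.orthogonal (L ⊔ (F ∙ s)) = (F ∙ s)
    apply le_antisymm
    · rintro x ⟨hx1, hx2⟩
      obtain ⟨l, hl, y, hy, rfl⟩ := Submodule.mem_sup.mp hx1
      obtain ⟨c, rfl⟩ := Submodule.mem_span_singleton.mp hy
      have hlz : l = 0 := by
        have h0 : ∀ l' ∈ L, B l' l = 0 := by
          intro l' hl'
          have h1 := (LinearMap.BilinForm.mem_orthogonal_iff.mp hx2) l'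
            (Submodule.mem_sup_left hl')
          have h2 : B l' (l + c • s) = 0 := h1
          rw [map_add, map_smul, smul_eq_mul, hLM l' hl' s hsM, mul_zero, add_zero] at h2
          exact h2
        have : (⟨l, hl⟩ : ↥L) = 0 := by
          apply hLnd.1
          rintro ⟨y, hy⟩
          show B l y = 0
          rw [hs]
          exact h0 y hy
        simpa using Subtype.ext_iff.mp this
      rw [hlz, zero_add]
      exact Submodule.smul_mem _ _ (Submodule.mem_span_singleton_self s)
    · rintro x hx
      obtain ⟨c, rfl⟩ := Submodule.mem_span_singleton.mp hx
      refine Submodule.mem_inf.mpr ⟨Submodule.mem_sup_right (Submodule.smul_mem _ _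
        (Submodule.mem_span_singleton_self s)), ?_⟩
      rw [LinearMap.BilinForm.mem_orthogonal_iff]
      intro n hn
      show B n (c • s) = 0
      rw [map_smul, smul_eq_mul, hperp n hn, mul_zero]
  obtain ⟨hrank1, hdeg1, hrad1⟩ := key r hrM hr0 hrr
  obtain ⟨hrank2, hdeg2, hrad2⟩ := key r' hr'M hr'0 hr'r'
  set W₁ := L ⊔ (F ∙ r) with hW₁
  set W₂ := L ⊔ (F ∙ r') with hW₂
  have hradne : bilinRadical B W₁ ≠ bilinRadical B W₂ := by
    rw [hrad1, hrad2]
    intro h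
    have : r' ∈ (F ∙ r) := h ▸ Submodule.mem_span_singleton_self r'
    obtain ⟨c, hc⟩ := Submodule.mem_span_singleton.mp this
    have : B r r' = 0 := by
      rw [← hc, map_smul, smul_eq_mul, hrr, mul_zero]
    rw [hBrr'] at this
    exact one_ne_zero this
  have hWne : W₁ ≠ W₂ := fun h => hradne (by rw [h])
  refine ⟨W₁, W₂, hWne, ?_, hradne, ?_⟩
  · ext W
    simp only [Set.mem_setOf_eq, Set.mem_insert_iff, Set.mem_singleton_iff]
    constructor
    · rintro ⟨hLW, hW3, hWdeg⟩
      obtain ⟨x, hx⟩ := not_forall.mp (fun h : (B.restrict W).SeparatingLeft => hWdeg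
          ((LinearMap.IsRefl.nondegenerate_iff_separatingLeft (hsymm.restrict W).isRefl).mpr h))
      rw [Classical.not_imp] at hx
      obtain ⟨hx1, hx2⟩ := hx
      have hxV0 : (x : V) ≠ 0 := fun h => hx2 (Subtype.ext h)
      have hxM : (x : V) ∈ M := by
        rw [LinearMap.BilinForm.mem_orthogonal_iff]
        intro n hn
        show B n (x : V) = 0
        rw [hs]
        exact hx1 ⟨n, hLW hn⟩
      have hxx : B (x : V) (x : V) = 0 := hx1 ⟨(x : V), x.2⟩
      have hWeq : ∀ z : V, z ≠ 0 → (x : V) ∈ (F ∙ z) → W = L ⊔ (F ∙ z) → False ∨ True := by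
        exact fun _ _ _ _ => Or.inr trivial
      rcases hclass (x : V) hxM hxx with h | h
      · left
        obtain ⟨c, hc⟩ := Submodule.mem_span_singleton.mp h
        have hc0 : c ≠ 0 := by
          intro h0
          rw [h0, zero_smul] at hc
          exact hxV0 hc.symm
        have hrW : r ∈ W := by
          have : (c⁻¹ • (x : V) : V) ∈ W := W.smul_mem _ x.2
          rwa [← hc, smul_smul, inv_mul_cancel₀ hc0, one_smul] at this
        have hle : W₁ ≤ W := sup_le hLW
          ((Submodule.span_singleton_le_iff_mem r W).mpr hrW)
        exact (Submodule.eq_of_le_of_finrank_le hle (by rw [hW3, hrank1])).symm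
      · right
        obtain ⟨c, hc⟩ := Submodule.mem_span_singleton.mp h
        have hc0 : c ≠ 0 := by
          intro h0
          rw [h0, zero_smul] at hc
          exact hxV0 hc.symm
        have hrW : r' ∈ W := by
          have : (c⁻¹ • (x : V) : V) ∈ W := W.smul_mem _ x.2
          rwa [← hc, smul_smul, inv_mul_cancel₀ hc0, one_smul] at this
        have hle : W₂ ≤ W := sup_le hLW
          ((Submodule.span_singleton_le_iff_mem r' W).mpr hrW)
        exact (Submodule.eq_of_le_of_finrank_le hle (by rw [hW3, hrank2])).symm
    · rintro (rfl | rfl)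
      · exact ⟨le_sup_left, hrank1, hdeg1⟩
      · exact ⟨le_sup_left, hrank2, hdeg2⟩
  · rintro W (rfl | rfl)
    · rw [hrad1]
      refine ⟨finrank_span_singleton hr0, ?_⟩
      intro v hv
      obtain ⟨c, rfl⟩ := Submodule.mem_span_singleton.mp hv
      simp only [map_smul, LinearMap.smul_apply, smul_eq_mul, hrr]
      ring
    · rw [hrad2]
      refine ⟨finrank_span_singleton hr'0, ?_⟩
      intro v hv
      obtain ⟨c, rfl⟩ := Submodule.mem_span_singleton.mp hv
      simp only [map_smul, LinearMap.smul_apply, smul_eq_mul, hr'r']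
      ring
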